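/- arXiv:1407.0912 — 2 statements merged into one kernel-verified Lean document; each statement's English description precedes it below -/
import Mathlib

section
/- (L^p bounds for the unfolding operator, Prop. 3.3(iv), 1 ≤ p < ∞.) Let ε > 0, fix a partition of (0,1) for the parameter ε, and let 1 ≤ p < ∞. Then for every φ ∈ L^p(R^ε) the function T_ε(φ) belongs to L^p((0,1) × Y*) and (l_0/ε)^{1/p} ‖φ‖_{L^p(R^ε)} ≤ ‖T_ε(φ)‖_{L^p((0,1)×Y*)} ≤ (l_1/ε)^{1/p} ‖φ‖_{L^p(R^ε)}. -/
open MeasureTheory Set Filter Topology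
open scoped ENNReal

noncomputable section

/-- The thin domain `R^ε = {(x,y) : x ∈ (0,1), 0 < y < ε G(x, x/ε)}`. -/
def thinDomain (G : ℝ → ℝ → ℝ) (ε : ℝ) : Set (ℝ × ℝ) :=
  {z : ℝ × ℝ | z.1 ∈ Ioo (0 : ℝ) 1 ∧ z.2 ∈ Ioo (0 : ℝ) (ε * G z.1 (z.1 / ε))}

/-- The reference cell `Y* = (0,l₁) × (0,G₁)`. -/
def Ystar (l1 G1 : ℝ) : Set (ℝ × ℝ) := Ioo (0 : ℝ) l1 ×ˢ Ioo (0 : ℝ) G1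

/-- A partition `0 = x₀ < x₁ < ⋯ < x_{N+1} = 1` of the interval `(0,1)` (for a parameter `ε`). -/
structure ThinPartition where
  N : ℕ
  pts : ℕ → ℝ
  pts_zero : pts 0 = 0
  pts_last : pts (N + 1) = 1
  pts_lt : ∀ k ≤ N, pts k < pts (k + 1)

/-- The index `k` such that `x ∈ [x_k, x_{k+1})` (for `x ∈ [0,1)`). -/
def ThinPartition.idx (P : ThinPartition) (x : ℝ) : ℕ :=
  Nat.findGreatest (fun k => P.pts k ≤ x) P.N

/-- `[x]_ε`, the partition point just below `x`. -/
def ThinPartition.bracket (P : ThinPartition) (x : ℝ) : ℝ := P.pts (P.idx x)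

/-- `Γ_{[x]_ε} = (x_{k+1} - x_k) / l(x_k)` for `x ∈ [x_k, x_{k+1})`. -/
def ThinPartition.Gamma (P : ThinPartition) (l : ℝ → ℝ) (x : ℝ) : ℝ :=
  (P.pts (P.idx x + 1) - P.pts (P.idx x)) / l (P.pts (P.idx x))

/-- The unfolding operator `T_ε` associated to a partition, acting on a function `φ` on `R^ε`
(extended by zero to all of `ℝ²` via the indicator of `R^ε`). -/
def unfoldOp (G : ℝ → ℝ → ℝ) (l : ℝ → ℝ) (ε : ℝ) (P : ThinPartition)
    (φ : ℝ × ℝ → ℝ) : ℝ × ℝ × ℝ → ℝ := fun q =>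
  if q.2.1 < l (P.bracket q.1) then
    (thinDomain G ε).indicator φ (P.bracket q.1 + P.Gamma l q.1 * q.2.1, ε * q.2.2)
  else 0

/-- The averaging operator `U_ε`, the formal adjoint of `T_ε`. -/
def avgOp (l : ℝ → ℝ) (ε : ℝ) (P : ThinPartition) (ψ : ℝ × ℝ × ℝ → ℝ) : ℝ × ℝ → ℝ := fun z =>
  (1 / l (P.bracket z.1)) *
    ∫ y₁ in Ioo (0 : ℝ) (l (P.bracket z.1)),
      ψ (P.bracket z.1 + P.Gamma l z.1 * y₁, (z.1 - P.bracket z.1) / P.Gamma l z.1, z.2 / ε)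

/-- The limit set `W = {(x,y₁,y₂) : x ∈ (0,1), 0 < y₁ < l(x), 0 < y₂ < G(x,y₁)}`. -/
def Wset (G : ℝ → ℝ → ℝ) (l : ℝ → ℝ) : Set (ℝ × ℝ × ℝ) :=
  {q | q.1 ∈ Ioo (0 : ℝ) 1 ∧ q.2.1 ∈ Ioo (0 : ℝ) (l q.1) ∧ q.2.2 ∈ Ioo (0 : ℝ) (G q.1 q.2.1)}

/-- The set `W₀ = {(x,y₁) : x ∈ (0,1), 0 < y₁ < l(x)}`. -/
def W0set (l : ℝ → ℝ) : Set (ℝ × ℝ) :=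
  {z : ℝ × ℝ | z.1 ∈ Ioo (0 : ℝ) 1 ∧ z.2 ∈ Ioo (0 : ℝ) (l z.1)}


lemma map_affine_volume {a : ℝ} (ha : 0 < a) (b : ℝ) :
    Measure.map (fun y => b + a * y) (volume : Measure ℝ) = ENNReal.ofReal a⁻¹ • volume := by
  have h1 : (fun y : ℝ => b + a * y) = (fun y : ℝ => b + y) ∘ (fun y : ℝ => a * y) := rfl
  rw [h1, ← Measure.map_map (measurable_const_add b) (measurable_const_mul a)]
  have h2 : Measure.map (fun y : ℝ => a * y) volume = ENNReal.ofReal |a⁻¹| • volume :=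
    Real.map_volume_mul_left ha.ne'
  rw [h2, Measure.map_smul]
  have h3 : Measure.map (fun y : ℝ => b + y) (volume : Measure ℝ) = volume :=
    map_add_left_eq_self volume b
  rw [h3, abs_of_pos (inv_pos.2 ha)]

lemma setLIntegral_comp_affine {a : ℝ} (ha : 0 < a) (b : ℝ) {f : ℝ → ℝ≥0∞}
    (hf : Measurable f) {t : Set ℝ} (ht : MeasurableSet t) :
    ∫⁻ y in (fun y : ℝ => b + a * y) ⁻¹' t, f (b + a * y)
      = ENNReal.ofReal a⁻¹ * ∫⁻ u in t, f u := by
  have hA : Measurable (fun y : ℝ => b + a * y) := (measurable_const_mul a).const_add b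
  have h1 : ∫⁻ y in (fun y : ℝ => b + a * y) ⁻¹' t, f (b + a * y)
      = ∫⁻ y, (t.indicator f) (b + a * y) := by
    rw [← lintegral_indicator (hA ht)]
    exact lintegral_congr fun y => by
      by_cases h : b + a * y ∈ t <;> simp [Set.indicator, Set.mem_preimage, h]
  rw [h1, ← lintegral_map (hf.indicator ht) hA, map_affine_volume ha b,
    lintegral_smul_measure, lintegral_indicator ht, smul_eq_mul]

lemma setLIntegral_comp_affine2 {a e : ℝ} (ha : 0 < a) (he : 0 < e) (b : ℝ)
    {f : ℝ × ℝ → ℝ≥0∞} (hf : Measurable f) {t₁ t₂ : Set ℝ}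
    (ht₁ : MeasurableSet t₁) (ht₂ : MeasurableSet t₂) :
    ∫⁻ y in ((fun y : ℝ => b + a * y) ⁻¹' t₁) ×ˢ ((fun y : ℝ => e * y) ⁻¹' t₂),
        f (b + a * y.1, e * y.2)
      = ENNReal.ofReal a⁻¹ * (ENNReal.ofReal e⁻¹ * ∫⁻ z in t₁ ×ˢ t₂, f z) := by
  have hF : Measurable fun z : ℝ × ℝ => f (b + a * z.1, e * z.2) := by fun_prop
  set g : ℝ → ℝ≥0∞ := fun u => ∫⁻ v, (Set.univ ×ˢ t₂).indicator f (u, v) with hg_def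
  have hg : Measurable g := (hf.indicator (MeasurableSet.univ.prod ht₂)).lintegral_prod_right'
  have hgeq : ∀ u : ℝ, g u = ∫⁻ v in t₂, f (u, v) := by
    intro u
    have : ∀ v : ℝ, (Set.univ ×ˢ t₂).indicator f (u, v)
        = t₂.indicator (fun v => f (u, v)) v := by
      intro v; by_cases h : v ∈ t₂ <;> simp [Set.indicator, h]
    rw [hg_def]
    simp only [this]
    rw [lintegral_indicator ht₂]
  have inner : ∀ u : ℝ, ∫⁻ v in (fun y : ℝ => e * y) ⁻¹' t₂, f (u, e * v)
      = ENNReal.ofReal e⁻¹ * g u := by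
    intro u
    have h0 := setLIntegral_comp_affine he 0 (f := fun v => f (u, v))
      (hf.comp measurable_prodMk_left) ht₂
    simp only [zero_add] at h0
    rw [h0, hgeq]
  rw [Measure.volume_eq_prod, ← Measure.prod_restrict, lintegral_prod _ hF.aemeasurable]
  have step1 : ∀ u : ℝ, ∫⁻ v in (fun y : ℝ => e * y) ⁻¹' t₂, f (b + a * u, e * v)
      = ENNReal.ofReal e⁻¹ * g (b + a * u) := fun u => inner (b + a * u)
  calc ∫⁻ u in (fun y : ℝ => b + a * y) ⁻¹' t₁, ∫⁻ v in (fun y : ℝ => e * y) ⁻¹' t₂,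
        f (b + a * u, e * v)
      = ∫⁻ u in (fun y : ℝ => b + a * y) ⁻¹' t₁, ENNReal.ofReal e⁻¹ * g (b + a * u) :=
        lintegral_congr step1
    _ = ENNReal.ofReal e⁻¹ * ∫⁻ u in (fun y : ℝ => b + a * y) ⁻¹' t₁, g (b + a * u) :=
        lintegral_const_mul' _ _ ENNReal.ofReal_ne_top
    _ = ENNReal.ofReal e⁻¹ * (ENNReal.ofReal a⁻¹ * ∫⁻ u in t₁, g u) := by
        rw [setLIntegral_comp_affine ha b hg ht₁]
    _ = ENNReal.ofReal a⁻¹ * (ENNReal.ofReal e⁻¹ * ∫⁻ z in t₁ ×ˢ t₂, f z) := by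
        rw [Measure.volume_eq_prod, ← Measure.prod_restrict, lintegral_prod _ hf.aemeasurable]
        simp only [← hgeq]
        ring

lemma null_preimage_affine2 {a e : ℝ} (ha : 0 < a) (he : 0 < e) (b : ℝ)
    {N : Set (ℝ × ℝ)} (hNm : MeasurableSet N) (hN : volume N = 0) :
    volume ((fun y : ℝ × ℝ => (b + a * y.1, e * y.2)) ⁻¹' N) = 0 := by
  have h := setLIntegral_comp_affine2 ha he b (f := N.indicator (1 : ℝ × ℝ → ℝ≥0∞))
    ((measurable_one).indicator hNm) MeasurableSet.univ MeasurableSet.univ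
  simp only [Set.preimage_univ, Set.univ_prod_univ, Measure.restrict_univ] at h
  have hL : ∫⁻ y : ℝ × ℝ, N.indicator (1 : ℝ × ℝ → ℝ≥0∞) (b + a * y.1, e * y.2)
      = volume ((fun y : ℝ × ℝ => (b + a * y.1, e * y.2)) ⁻¹' N) := by
    have : ∀ y : ℝ × ℝ, N.indicator (1 : ℝ × ℝ → ℝ≥0∞) (b + a * y.1, e * y.2)
        = ((fun y : ℝ × ℝ => (b + a * y.1, e * y.2)) ⁻¹' N).indicator (1 : ℝ × ℝ → ℝ≥0∞) y := by
      intro y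
      by_cases hy : (b + a * y.1, e * y.2) ∈ N <;>
        simp [Set.indicator, Set.mem_preimage, hy]
    simp only [this]
    have hm : MeasurableSet ((fun y : ℝ × ℝ => (b + a * y.1, e * y.2)) ⁻¹' N) := by
      exact (by fun_prop : Measurable (fun y : ℝ × ℝ => (b + a * y.1, e * y.2))) hNm
    rw [lintegral_indicator hm]
    simp
  rw [hL] at h
  rw [h]
  have : ∫⁻ z : ℝ × ℝ, N.indicator (1 : ℝ × ℝ → ℝ≥0∞) z = 0 := by
    rw [lintegral_indicator hNm]; simp [hN]
  rw [this]
  simp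

lemma lintegral_finset_biUnion' {α : Type*} [MeasurableSpace α] (μ : Measure α) (n : ℕ)
    (s : ℕ → Set α) (hm : ∀ k, MeasurableSet (s k))
    (hd : ∀ i j, i < n → j < n → i < j → Disjoint (s i) (s j)) (f : α → ℝ≥0∞) :
    ∫⁻ a in ⋃ k ∈ Finset.range n, s k, f a ∂μ = ∑ k ∈ Finset.range n, ∫⁻ a in s k, f a ∂μ := by
  set t : ℕ → Set α := fun k => if k < n then s k else ∅ with ht_def
  have hUnion : ⋃ k, t k = ⋃ k ∈ Finset.range n, s k := by
    ext x
    simp only [Set.mem_iUnion, Finset.mem_range, t]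
    constructor
    · rintro ⟨k, hk⟩
      by_cases h : k < n
      · exact ⟨k, h, by simpa [h] using hk⟩
      · simp [h] at hk
    · rintro ⟨k, hk, hx⟩
      exact ⟨k, by simp [hk, hx]⟩
  have hmt : ∀ k, MeasurableSet (t k) := fun k => by
    by_cases h : k < n <;> simp [t, h, hm k]
  have hdt : Pairwise (Function.onFun Disjoint t) := by
    intro i j hij
    by_cases hi : i < n
    · by_cases hj : j < n
      · rcases hij.lt_or_gt with h | h
        · simpa [Function.onFun, t, hi, hj] using hd i j hi hj h
        · simpa [Function.onFun, t, hi, hj] using (hd j i hj hi h).symm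
      · simp [Function.onFun, t, hj]
    · simp [Function.onFun, t, hi]
  rw [← hUnion, lintegral_iUnion hmt hdt f, tsum_eq_sum (s := Finset.range n)
    (fun k hk => by simp only [Finset.mem_range, not_lt] at hk; simp [t, Nat.not_lt.2 hk])]
  exact Finset.sum_congr rfl fun k hk => by
    simp only [Finset.mem_range] at hk; simp [t, hk]

lemma ThinPartition.pts_le (P : ThinPartition) : ∀ {j i : ℕ}, i ≤ j → j ≤ P.N + 1 → P.pts i ≤ P.pts j := by
  intro j
  induction j with
  | zero => intro i hi _; interval_cases i; rfl
  | succ j ih =>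
    intro i hi hj
    rcases Nat.eq_or_lt_of_le hi with rfl | hlt
    · rfl
    · exact le_trans (ih (Nat.lt_succ_iff.1 hlt) (by omega))
        (P.pts_lt j (by omega)).le

lemma ThinPartition.pts_mem (P : ThinPartition) {k : ℕ} (hk : k ≤ P.N + 1) :
    P.pts k ∈ Icc (0 : ℝ) 1 :=
  ⟨P.pts_zero ▸ P.pts_le (Nat.zero_le k) hk, P.pts_last ▸ P.pts_le hk le_rfl⟩

lemma ThinPartition.idx_le (P : ThinPartition) (x : ℝ) : P.idx x ≤ P.N := Nat.findGreatest_le _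

lemma ThinPartition.idx_eq (P : ThinPartition) {k : ℕ} {x : ℝ} (hk : k ≤ P.N)
    (h1 : P.pts k ≤ x) (h2 : x < P.pts (k + 1)) : P.idx x = k := by
  unfold ThinPartition.idx
  rw [Nat.findGreatest_eq_iff]
  refine ⟨hk, fun _ => h1, fun n hn hnN => ?_⟩
  exact not_le.2 (h2.trans_le (P.pts_le hn (by omega)))

lemma ThinPartition.idx_spec (P : ThinPartition) {x : ℝ} (h0 : 0 ≤ x) (h1 : x < 1) :
    P.pts (P.idx x) ≤ x ∧ x < P.pts (P.idx x + 1) := by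
  have hP0 : P.pts 0 ≤ x := by rw [P.pts_zero]; exact h0
  have hle : P.pts (P.idx x) ≤ x :=
    Nat.findGreatest_spec (P := fun k => P.pts k ≤ x) (Nat.zero_le P.N) hP0
  refine ⟨hle, ?_⟩
  by_cases hN : P.idx x = P.N
  · rw [hN]
    calc x < 1 := h1
    _ = P.pts (P.N + 1) := P.pts_last.symm
  · by_contra hcon
    push_neg at hcon
    have hfg : P.idx x + 1 ≤ P.idx x :=
      Nat.le_findGreatest (P := fun k => P.pts k ≤ x) (n := P.N) (m := P.idx x + 1)
        (by have := P.idx_le x; omega) hcon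
    omega

lemma ThinPartition.idx_mono (P : ThinPartition) : Monotone P.idx := fun x y h =>
  Nat.findGreatest_mono (fun k hk => le_trans hk h) le_rfl

lemma ThinPartition.measurable_idx (P : ThinPartition) : Measurable P.idx := by
  apply measurable_to_countable'
  intro k
  have hoc : OrdConnected (P.idx ⁻¹' {k}) := by
    constructor
    rintro x hx z hz y hy
    have h1 : P.idx x ≤ P.idx y := P.idx_mono hy.1
    have h2 : P.idx y ≤ P.idx z := P.idx_mono hy.2
    simp only [Set.mem_preimage, Set.mem_singleton_iff] at hx hz ⊢
    omega
  exact hoc.measurableSet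

lemma unfoldOp_apply_of_idx (G : ℝ → ℝ → ℝ) (l : ℝ → ℝ) (ε : ℝ) (P : ThinPartition)
    (ψ : ℝ × ℝ → ℝ) {k : ℕ} {q : ℝ × ℝ × ℝ} (hidx : P.idx q.1 = k) :
    unfoldOp G l ε P ψ q = if q.2.1 < l (P.pts k) then
      (thinDomain G ε).indicator ψ
        (P.pts k + (P.pts (k + 1) - P.pts k) / l (P.pts k) * q.2.1, ε * q.2.2)
    else 0 := by
  simp [unfoldOp, ThinPartition.bracket, ThinPartition.Gamma, hidx]

set_option maxHeartbeats 2000000 in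
/-- `L^p` bounds for the unfolding operator (Prop. 3.3(iv), `1 ≤ p < ∞`). -/
theorem unfolding_Lp_bounds
    (l0 l1 G0 G1 : ℝ) (hl0 : 0 < l0) (hl01 : l0 < l1) (hG0 : 0 < G0) (hG01 : G0 ≤ G1)
    (l : ℝ → ℝ) (hlC1 : ContDiffOn ℝ 1 l (Ioo 0 1))
    (hlb : ∀ x ∈ Icc (0 : ℝ) 1, l0 ≤ l x ∧ l x < l1)
    (G : ℝ → ℝ → ℝ)
    (hGcont : ContinuousOn (fun z : ℝ × ℝ => G z.1 z.2) (Ioo 0 1 ×ˢ (univ : Set ℝ)))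
    (hGb : ∀ x ∈ Ioo (0 : ℝ) 1, ∀ y : ℝ, G0 ≤ G x y ∧ G x y ≤ G1)
    (hGper : ∀ x ∈ Ioo (0 : ℝ) 1, ∀ y : ℝ, G x (y + l x) = G x y)
    (ε : ℝ) (hε : 0 < ε) (P : ThinPartition)
    (p : ℝ) (hp : 1 ≤ p)
    (φ : ℝ × ℝ → ℝ)
    (hφ : MemLp φ (ENNReal.ofReal p) (volume.restrict (thinDomain G ε))) :
    MemLp (unfoldOp G l ε P φ) (ENNReal.ofReal p)
        (volume.restrict (Ioo (0 : ℝ) 1 ×ˢ Ystar l1 G1)) ∧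
    (l0 / ε) ^ (1 / p) * (∫ z in thinDomain G ε, |φ z| ^ p) ^ (1 / p)
      ≤ (∫ q in Ioo (0 : ℝ) 1 ×ˢ Ystar l1 G1, |unfoldOp G l ε P φ q| ^ p) ^ (1 / p) ∧
    (∫ q in Ioo (0 : ℝ) 1 ×ˢ Ystar l1 G1, |unfoldOp G l ε P φ q| ^ p) ^ (1 / p)
      ≤ (l1 / ε) ^ (1 / p) * (∫ z in thinDomain G ε, |φ z| ^ p) ^ (1 / p) := by
  have hp0 : 0 < p := lt_of_lt_of_le one_pos hp
  have hl1pos : 0 < l1 := hl0.trans hl01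
  have hG1pos : 0 < G1 := lt_of_lt_of_le hG0 hG01
  have hεG1 : 0 < ε * G1 := mul_pos hε hG1pos
  set D : Set (ℝ × ℝ) := thinDomain G ε with hD_def
  set S : Set (ℝ × ℝ × ℝ) := Ioo (0 : ℝ) 1 ×ˢ Ystar l1 G1 with hS_def
  have hpne0 : (ENNReal.ofReal p) ≠ 0 := by simp [ENNReal.ofReal_eq_zero, not_le, hp0]
  have hpnetop : (ENNReal.ofReal p) ≠ ⊤ := ENNReal.ofReal_ne_top
  have hptoReal : (ENNReal.ofReal p).toReal = p := ENNReal.toReal_ofReal hp0.le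
  -- D is open, hence measurable
  have hDopen : IsOpen D := by
    have hU : IsOpen ((Ioo (0:ℝ) 1) ×ˢ (univ : Set ℝ)) := isOpen_Ioo.prod isOpen_univ
    have hmapsTo : MapsTo (fun z : ℝ × ℝ => (z.1, z.1 / ε)) ((Ioo (0:ℝ) 1) ×ˢ (univ : Set ℝ))
        ((Ioo (0:ℝ) 1) ×ˢ (univ : Set ℝ)) := fun z hz => ⟨hz.1, mem_univ _⟩
    have hmap : ContinuousOn (fun z : ℝ × ℝ => G z.1 (z.1 / ε))
        ((Ioo (0:ℝ) 1) ×ˢ (univ : Set ℝ)) := by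
      exact hGcont.comp ((continuous_fst.prodMk (continuous_fst.div_const ε)).continuousOn)
        hmapsTo
    have hcont : ContinuousOn (fun z : ℝ × ℝ => ε * G z.1 (z.1 / ε) - z.2)
        ((Ioo (0:ℝ) 1) ×ˢ (univ : Set ℝ)) :=
      (continuousOn_const.mul hmap).sub continuous_snd.continuousOn
    have h1 : IsOpen (((Ioo (0:ℝ) 1) ×ˢ (univ : Set ℝ)) ∩
        (fun z : ℝ × ℝ => ε * G z.1 (z.1 / ε) - z.2) ⁻¹' (Ioi 0)) :=
      hcont.isOpen_inter_preimage hU isOpen_Ioi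
    have heq : D = (((Ioo (0:ℝ) 1) ×ˢ (univ : Set ℝ)) ∩
        (fun z : ℝ × ℝ => ε * G z.1 (z.1 / ε) - z.2) ⁻¹' (Ioi 0)) ∩ {z : ℝ × ℝ | 0 < z.2} := by
      ext z
      simp only [hD_def, thinDomain, Set.mem_setOf_eq, Set.mem_inter_iff, Set.mem_prod,
        Set.mem_preimage, Set.mem_Ioi, Set.mem_Ioo, Set.mem_univ, and_true, sub_pos]
      tauto
    rw [heq]
    exact (h1.inter (isOpen_lt continuous_const continuous_snd))
  have hDm : MeasurableSet D := hDopen.measurableSet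
  have hSm : MeasurableSet S := measurableSet_Ioo.prod (measurableSet_Ioo.prod measurableSet_Ioo)
  have hDsub : D ⊆ Ioo (0:ℝ) 1 ×ˢ Ioo 0 (ε * G1) := by
    rintro z ⟨hz1, hz2⟩
    refine ⟨hz1, hz2.1, lt_of_lt_of_le hz2.2 ?_⟩
    have := (hGb z.1 hz1 (z.1 / ε)).2
    nlinarith
  -- measurable representative
  have hφm := hφ.1
  set ψ : ℝ × ℝ → ℝ := hφm.mk φ with hψ_def
  have hψmeas : Measurable ψ := hφm.stronglyMeasurable_mk.measurable
  have hφψ : φ =ᵐ[volume.restrict D] ψ := hφm.ae_eq_mk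
  have hNdiff : volume {z : ℝ × ℝ | D.indicator φ z ≠ D.indicator ψ z} = 0 := by
    have h1 : volume.restrict D {z | φ z ≠ ψ z} = 0 := by
      rw [Filter.EventuallyEq, ae_iff] at hφψ
      exact hφψ
    rw [Measure.restrict_apply' hDm] at h1
    refine measure_mono_null ?_ h1
    intro z hz
    simp only [Set.mem_setOf_eq] at hz ⊢
    by_cases hzD : z ∈ D
    · exact ⟨by simpa [Set.indicator_of_mem hzD] using hz, hzD⟩
    · exact absurd (by simp [Set.indicator_of_notMem hzD]) hz
  obtain ⟨Nm, hNsub, hNmm, hNm0⟩ := exists_measurable_superset_of_null hNdiff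
  -- abbreviations for the partition data
  have hΔpos : ∀ k ≤ P.N, 0 < P.pts (k + 1) - P.pts k := fun k hk => sub_pos.2 (P.pts_lt k hk)
  have hlk : ∀ k ≤ P.N + 1, l0 ≤ l (P.pts k) ∧ l (P.pts k) < l1 := fun k hk =>
    hlb _ (P.pts_mem hk)
  have hlkpos : ∀ k ≤ P.N + 1, 0 < l (P.pts k) := fun k hk => lt_of_lt_of_le hl0 (hlk k hk).1
  have hΓpos : ∀ k ≤ P.N, 0 < (P.pts (k + 1) - P.pts k) / l (P.pts k) := fun k hk =>
    div_pos (hΔpos k hk) (hlkpos k (by omega))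
  -- measurability of the unfolding of ψ
  have hbr : Measurable (P.bracket) :=
    Measurable.comp (g := fun k : ℕ => P.pts k) measurable_from_top P.measurable_idx
  have hGam : Measurable (P.Gamma l) :=
    Measurable.comp (g := fun k : ℕ => (P.pts (k + 1) - P.pts k) / l (P.pts k))
      measurable_from_top P.measurable_idx
  have hlbr : Measurable (fun x => l (P.bracket x)) :=
    Measurable.comp (g := fun k : ℕ => l (P.pts k)) measurable_from_top P.measurable_idx
  have hTm : Measurable (unfoldOp G l ε P ψ) := by
    unfold unfoldOp
    apply Measurable.ite
    · exact measurableSet_lt (measurable_fst.comp measurable_snd)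
        (hlbr.comp measurable_fst)
    · have h1 : Measurable fun q : ℝ × ℝ × ℝ => P.bracket q.1 + P.Gamma l q.1 * q.2.1 :=
        (hbr.comp measurable_fst).add
          ((hGam.comp measurable_fst).mul (measurable_fst.comp measurable_snd))
      have h2 : Measurable fun q : ℝ × ℝ × ℝ => ε * q.2.2 :=
        (measurable_snd.comp measurable_snd).const_mul ε
      exact (hψmeas.indicator hDm).comp (h1.prodMk h2)
    · exact measurable_const
  -- a.e. equality of the two unfoldings on S
  have haeq : unfoldOp G l ε P φ =ᵐ[volume.restrict S] unfoldOp G l ε P ψ := by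
    have hbad : volume ({q : ℝ × ℝ × ℝ |
        unfoldOp G l ε P φ q ≠ unfoldOp G l ε P ψ q} ∩ S) = 0 := by
      set Bad : ℕ → Set (ℝ × ℝ × ℝ) := fun k =>
        if k ≤ P.N then Ico (P.pts k) (P.pts (k + 1)) ×ˢ
          ((fun y : ℝ × ℝ =>
            (P.pts k + (P.pts (k + 1) - P.pts k) / l (P.pts k) * y.1, ε * y.2)) ⁻¹' Nm)
        else ∅ with hBad_def
      have hsub : {q : ℝ × ℝ × ℝ |
          unfoldOp G l ε P φ q ≠ unfoldOp G l ε P ψ q} ∩ S ⊆ ⋃ k, Bad k := by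
        rintro q ⟨hq1, hq2⟩
        have hx : q.1 ∈ Ioo (0 : ℝ) 1 := hq2.1
        have hk : P.idx q.1 ≤ P.N := P.idx_le q.1
        have hspec := P.idx_spec hx.1.le hx.2
        refine Set.mem_iUnion.2 ⟨P.idx q.1, ?_⟩
        rw [hBad_def]
        simp only [if_pos hk]
        refine ⟨⟨hspec.1, hspec.2⟩, ?_⟩
        have hval1 := unfoldOp_apply_of_idx G l ε P φ (q := q) rfl
        have hval2 := unfoldOp_apply_of_idx G l ε P ψ (q := q) rfl
        simp only [Set.mem_setOf_eq] at hq1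
        by_cases hcond : q.2.1 < l (P.pts (P.idx q.1))
        · apply hNsub
          rw [hval1, hval2, if_pos hcond, if_pos hcond] at hq1
          exact hq1
        · exfalso
          apply hq1
          rw [hval1, hval2, if_neg hcond, if_neg hcond]
      refine measure_mono_null hsub (measure_iUnion_null fun k => ?_)
      rw [hBad_def]
      by_cases hk : k ≤ P.N
      · simp only [if_pos hk]
        have hnull : volume ((fun y : ℝ × ℝ =>
            (P.pts k + (P.pts (k + 1) - P.pts k) / l (P.pts k) * y.1, ε * y.2)) ⁻¹' Nm) = 0 :=
          null_preimage_affine2 (hΓpos k hk) hε _ hNmm hNm0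
        rw [Measure.volume_eq_prod, Measure.prod_prod, hnull, mul_zero]
      · simp only [if_neg hk]
        exact measure_empty
    rw [Filter.EventuallyEq, ae_iff, Measure.restrict_apply' hSm]
    exact hbad
  -- the nonnegative integrands
  set f : ℝ × ℝ → ℝ≥0∞ := fun z => (‖D.indicator ψ z‖₊ : ℝ≥0∞) ^ p with hf_def
  have hfm : Measurable f := ((hψmeas.indicator hDm).enorm).pow_const p
  set g : ℝ × ℝ × ℝ → ℝ≥0∞ := fun q => (‖unfoldOp G l ε P ψ q‖₊ : ℝ≥0∞) ^ p with hg_def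
  have hgm : Measurable g := (hTm.enorm).pow_const p
  set T : ℕ → Set (ℝ × ℝ) := fun k => Ioo (P.pts k) (P.pts (k + 1)) ×ˢ Ioo 0 (ε * G1) with hT_def
  set J : ℕ → ℝ≥0∞ := fun k => ∫⁻ z in T k, f z with hJ_def
  have hIoo_sub : ∀ k ≤ P.N, Ioo (P.pts k) (P.pts (k + 1)) ⊆ Ioo (0:ℝ) 1 := by
    intro k hk x hx
    exact ⟨lt_of_le_of_lt (P.pts_mem (by omega)).1 hx.1,
      lt_of_lt_of_le hx.2 (P.pts_mem (by omega)).2⟩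
  have hIoo_disj : ∀ i j, i ≤ P.N → j ≤ P.N → i < j →
      Disjoint (Ioo (P.pts i) (P.pts (i + 1))) (Ioo (P.pts j) (P.pts (j + 1))) := by
    intro i j hi hj hij
    rw [Set.disjoint_left]
    rintro x ⟨_, hx2⟩ ⟨hx3, _⟩
    have : P.pts (i + 1) ≤ P.pts j := P.pts_le hij (by omega)
    linarith
  -- the main identity
  have hTdisj : ∀ i j, i < P.N + 1 → j < P.N + 1 → i < j → Disjoint (T i) (T j) := by
    intro i j hi hj hij
    have hd := hIoo_disj i j (by omega) (by omega) hij
    rw [Set.disjoint_left] at hd ⊢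
    rintro z hz1 hz2
    exact hd hz1.1 hz2.1
  have hZ3 : volume (⋃ k ∈ Finset.range (P.N + 1),
      ({P.pts k} ×ˢ (univ : Set (ℝ × ℝ)))) = 0 := by
    refine measure_iUnion_null fun k => measure_iUnion_null fun hk => ?_
    rw [Measure.volume_eq_prod, Measure.prod_prod]
    simp
  have hZ2 : volume (⋃ k ∈ Finset.range (P.N + 1),
      ({P.pts k} ×ˢ (univ : Set ℝ))) = 0 := by
    refine measure_iUnion_null fun k => measure_iUnion_null fun hk => ?_
    rw [Measure.volume_eq_prod, Measure.prod_prod]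
    simp
  have main : ∫⁻ q in S, g q
      = ∑ k ∈ Finset.range (P.N + 1), ENNReal.ofReal (l (P.pts k) / ε) * J k := by
    set strip : ℕ → Set (ℝ × ℝ × ℝ) :=
      fun k => Ioo (P.pts k) (P.pts (k + 1)) ×ˢ Ystar l1 G1 with hstrip_def
    have hstripm : ∀ k, MeasurableSet (strip k) := fun k =>
      measurableSet_Ioo.prod (measurableSet_Ioo.prod measurableSet_Ioo)
    have hstrip_sub : ∀ k ≤ P.N, strip k ⊆ S := by
      intro k hk
      rintro q ⟨hq1, hq2⟩
      exact ⟨hIoo_sub k hk hq1, hq2⟩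
    have hSae : S =ᵐ[volume] ⋃ k ∈ Finset.range (P.N + 1), strip k := by
      rw [ae_eq_set]
      constructor
      · refine measure_mono_null ?_ hZ3
        rintro q ⟨hqS, hqU⟩
        have hx : q.1 ∈ Ioo (0 : ℝ) 1 := hqS.1
        have hk := P.idx_le q.1
        have hspec := P.idx_spec hx.1.le hx.2
        rcases eq_or_lt_of_le hspec.1 with heq | hlt
        · exact Set.mem_biUnion (Finset.mem_range.2 (by omega))
            ⟨Set.mem_singleton_iff.2 heq.symm, Set.mem_univ _⟩
        · exact absurd (Set.mem_biUnion (Finset.mem_range.2 (by omega))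
            (⟨⟨hlt, hspec.2⟩, hqS.2⟩ : q ∈ strip (P.idx q.1))) hqU
      · have hsub : (⋃ k ∈ Finset.range (P.N + 1), strip k) ⊆ S :=
          Set.iUnion₂_subset fun k hk =>
            hstrip_sub k (by simpa [Nat.lt_succ_iff] using Finset.mem_range.1 hk)
        rw [Set.diff_eq_empty.2 hsub]
        exact measure_empty
    rw [setLIntegral_congr hSae, lintegral_finset_biUnion' volume (P.N + 1) strip hstripm
      (fun i j hi hj hij => by
        have hd := hIoo_disj i j (by omega) (by omega) hij
        rw [Set.disjoint_left] at hd ⊢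
        rintro q hq1 hq2
        exact hd hq1.1 hq2.1) g]
    apply Finset.sum_congr rfl
    intro k hkmem
    have hk : k ≤ P.N := by simpa [Nat.lt_succ_iff] using Finset.mem_range.1 hkmem
    set a : ℝ := (P.pts (k + 1) - P.pts k) / l (P.pts k) with ha_def
    have ha : 0 < a := hΓpos k hk
    have hΔ : 0 < P.pts (k + 1) - P.pts k := hΔpos k hk
    have hlkk : 0 < l (P.pts k) := hlkpos k (by omega)
    have hlkl1 : l (P.pts k) < l1 := (hlk k (by omega)).2
    set Ik : ℝ≥0∞ := ∫⁻ y in Ystar l1 G1,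
      (if y.1 < l (P.pts k) then f (P.pts k + a * y.1, ε * y.2) else 0) with hIk_def
    have hstep1 : ∫⁻ q in strip k, g q = Ik * ENNReal.ofReal (P.pts (k + 1) - P.pts k) := by
      rw [hstrip_def]
      simp only
      rw [Measure.volume_eq_prod, ← Measure.prod_restrict, lintegral_prod _ hgm.aemeasurable]
      have hcongr : ∀ᵐ x ∂(volume : Measure ℝ), x ∈ Ioo (P.pts k) (P.pts (k + 1)) →
          (∫⁻ y in Ystar l1 G1, g (x, y)) = Ik := by
        refine Filter.Eventually.of_forall fun x hx => ?_
        have hidx : P.idx x = k := P.idx_eq hk hx.1.le hx.2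
        rw [hIk_def]
        refine lintegral_congr fun y => ?_
        have hval := unfoldOp_apply_of_idx G l ε P ψ (q := (x, y)) hidx
        rw [hg_def]
        simp only
        rw [hval, apply_ite (fun r : ℝ => (‖r‖₊ : ℝ≥0∞) ^ p)]
        simp [ENNReal.zero_rpow_of_pos hp0, hf_def, ha_def, hD_def]
      rw [setLIntegral_congr_fun_ae measurableSet_Ioo hcongr, setLIntegral_const, Real.volume_Ioo]
    have hal : a * l (P.pts k) = P.pts (k + 1) - P.pts k := div_mul_cancel₀ _ hlkk.ne'
    have hpre1 : (fun y : ℝ => P.pts k + a * y) ⁻¹' (Ioo (P.pts k) (P.pts (k + 1)))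
        = Ioo 0 (l (P.pts k)) := by
      ext y
      simp only [Set.mem_preimage, Set.mem_Ioo]
      constructor
      · rintro ⟨h1, h2⟩
        have h1' : 0 < a * y := by linarith
        have h2' : a * y < a * l (P.pts k) := by rw [hal]; linarith
        have hy : 0 < y := by
          by_contra hy
          push_neg at hy
          nlinarith [mul_nonpos_of_nonneg_of_nonpos ha.le hy]
        exact ⟨hy, lt_of_mul_lt_mul_left (by linarith) ha.le⟩
      · rintro ⟨h1, h2⟩
        have h1' : 0 < a * y := mul_pos ha h1
        have h2' : a * y < a * l (P.pts k) := by
          exact mul_lt_mul_of_pos_left h2 ha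
        rw [hal] at h2'
        constructor <;> linarith
    have hpre2 : (fun y : ℝ => ε * y) ⁻¹' (Ioo 0 (ε * G1)) = Ioo 0 G1 := by
      ext y
      simp only [Set.mem_preimage, Set.mem_Ioo]
      constructor
      · rintro ⟨h1, h2⟩
        have hy : 0 < y := by
          by_contra hy
          push_neg at hy
          nlinarith [mul_nonpos_of_nonneg_of_nonpos hε.le hy]
        exact ⟨hy, lt_of_mul_lt_mul_left (by linarith) hε.le⟩
      · rintro ⟨h1, h2⟩
        exact ⟨mul_pos hε h1, mul_lt_mul_of_pos_left h2 hε⟩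
    have hskm : MeasurableSet (Ioo (0:ℝ) (l (P.pts k)) ×ˢ Ioo (0:ℝ) G1) :=
      measurableSet_Ioo.prod measurableSet_Ioo
    have hYm : MeasurableSet (Ystar l1 G1) := measurableSet_Ioo.prod measurableSet_Ioo
    have hsk : Ioo (0:ℝ) (l (P.pts k)) ×ˢ Ioo (0:ℝ) G1 ⊆ Ystar l1 G1 := by
      rintro y ⟨h1, h2⟩
      exact ⟨⟨h1.1, h1.2.trans hlkl1⟩, h2⟩
    have hIk2 : Ik = ENNReal.ofReal a⁻¹ * (ENNReal.ofReal ε⁻¹ * J k) := by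
      rw [hIk_def]
      have hcongr2 : ∀ᵐ y ∂(volume : Measure (ℝ × ℝ)), y ∈ Ystar l1 G1 →
          (if y.1 < l (P.pts k) then f (P.pts k + a * y.1, ε * y.2) else 0)
          = (Ioo (0:ℝ) (l (P.pts k)) ×ˢ Ioo (0:ℝ) G1).indicator
              (fun y : ℝ × ℝ => f (P.pts k + a * y.1, ε * y.2)) y := by
        refine Filter.Eventually.of_forall fun y hy => ?_
        by_cases hc : y.1 < l (P.pts k)
        · rw [if_pos hc, Set.indicator_of_mem
            (show y ∈ Ioo (0:ℝ) (l (P.pts k)) ×ˢ Ioo (0:ℝ) G1 from ⟨⟨hy.1.1, hc⟩, hy.2⟩)]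
        · rw [if_neg hc, Set.indicator_of_notMem]
          rintro ⟨h1, _⟩
          exact hc h1.2
      rw [setLIntegral_congr_fun_ae hYm hcongr2, lintegral_indicator hskm,
        Measure.restrict_restrict hskm, Set.inter_eq_self_of_subset_left hsk,
        ← hpre1, ← hpre2, setLIntegral_comp_affine2 ha hε _ hfm measurableSet_Ioo
          measurableSet_Ioo]
    rw [hstep1, hIk2]
    have h1 : ENNReal.ofReal a⁻¹ * ENNReal.ofReal ε⁻¹ *
        ENNReal.ofReal (P.pts (k + 1) - P.pts k) = ENNReal.ofReal (l (P.pts k) / ε) := by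
      rw [← ENNReal.ofReal_mul (by positivity), ← ENNReal.ofReal_mul (by positivity)]
      congr 1
      rw [ha_def, inv_div]
      field_simp
    rw [← h1]
    ring
  have hJsum : ∑ k ∈ Finset.range (P.N + 1), J k = ∫⁻ z in D, f z := by
    have hTm' : ∀ k, MeasurableSet (T k) := fun k => measurableSet_Ioo.prod measurableSet_Ioo
    have hf_ind : f = D.indicator (fun z => (‖ψ z‖₊ : ℝ≥0∞) ^ p) := by
      funext z
      by_cases h : z ∈ D <;>
        simp [hf_def, Set.indicator, h, ENNReal.zero_rpow_of_pos hp0]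
    have hJk : ∀ k, J k = ∫⁻ z in D ∩ T k, (‖ψ z‖₊ : ℝ≥0∞) ^ p := by
      intro k
      rw [hJ_def]
      simp only
      rw [hf_ind, lintegral_indicator hDm, Measure.restrict_restrict hDm]
    have hDf : ∫⁻ z in D, f z = ∫⁻ z in D, (‖ψ z‖₊ : ℝ≥0∞) ^ p :=
      setLIntegral_congr_fun hDm (fun z hz => by
        rw [hf_ind, Set.indicator_of_mem hz])
    simp only [hJk]
    rw [hDf, ← lintegral_finset_biUnion' volume (P.N + 1) (fun k => D ∩ T k)
      (fun k => hDm.inter (hTm' k))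
      (fun i j hi hj hij => (hTdisj i j hi hj hij).mono Set.inter_subset_right
        Set.inter_subset_right) _]
    apply setLIntegral_congr
    rw [ae_eq_set]
    constructor
    · rw [Set.diff_eq_empty.2 (Set.iUnion₂_subset fun k _ => Set.inter_subset_left)]
      exact measure_empty
    · refine measure_mono_null ?_ hZ2
      rintro z ⟨hzD, hzU⟩
      have hbox := hDsub hzD
      have hx : z.1 ∈ Ioo (0 : ℝ) 1 := hbox.1
      have hk := P.idx_le z.1
      have hspec := P.idx_spec hx.1.le hx.2
      rcases eq_or_lt_of_le hspec.1 with heq | hlt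
      · exact Set.mem_biUnion (Finset.mem_range.2 (by omega))
          ⟨Set.mem_singleton_iff.2 heq.symm, Set.mem_univ _⟩
      · exact absurd (Set.mem_biUnion (Finset.mem_range.2 (by omega))
          (⟨hzD, ⟨⟨hlt, hspec.2⟩, hbox.2⟩⟩ : z ∈ D ∩ T (P.idx z.1))) hzU
  have hBψ : ∫⁻ z in D, f z = ∫⁻ z in D, (‖φ z‖₊ : ℝ≥0∞) ^ p := by
    apply lintegral_congr_ae
    filter_upwards [hφψ, ae_restrict_mem hDm] with z h1 h2
    simp only [hf_def, Set.indicator_of_mem h2, h1]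
  set B : ℝ≥0∞ := ∫⁻ z in D, (‖φ z‖₊ : ℝ≥0∞) ^ p with hB_def
  have hBfin : B ≠ ⊤ := by
    have h := hφ.2
    rw [eLpNorm_eq_lintegral_rpow_enorm_toReal hpne0 hpnetop, hptoReal] at h
    simp only [enorm_eq_nnnorm] at h
    intro hcon
    rw [← hB_def] at h
    rw [hcon, ENNReal.top_rpow_of_pos (by positivity)] at h
    exact (lt_irrefl _ h).elim
  set C : ℝ≥0∞ := ∫⁻ q in S, (‖unfoldOp G l ε P φ q‖₊ : ℝ≥0∞) ^ p with hC_def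
  have hCψ : C = ∫⁻ q in S, g q := by
    apply lintegral_congr_ae
    filter_upwards [haeq] with q hq
    rw [hg_def]
    simp only [hq]
  have hlow : ENNReal.ofReal (l0 / ε) * B ≤ C := by
    rw [hCψ, main, ← hBψ, ← hJsum, Finset.mul_sum]
    apply Finset.sum_le_sum
    intro k hk
    simp only [Finset.mem_range] at hk
    refine mul_le_mul_left (ENNReal.ofReal_le_ofReal ?_) _
    have := (hlk k (by omega)).1
    gcongr
  have hupp : C ≤ ENNReal.ofReal (l1 / ε) * B := by
    rw [hCψ, main, ← hBψ, ← hJsum, Finset.mul_sum]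
    apply Finset.sum_le_sum
    intro k hk
    simp only [Finset.mem_range] at hk
    refine mul_le_mul_left (ENNReal.ofReal_le_ofReal ?_) _
    have h3 : l (P.pts k) ≤ l1 := (hlk k (by omega)).2.le
    gcongr
  have hCfin : C ≠ ⊤ :=
    (lt_of_le_of_lt hupp (ENNReal.mul_lt_top ENNReal.ofReal_ne_top.lt_top hBfin.lt_top)).ne
  -- membership in L^p
  have haesm : AEStronglyMeasurable (unfoldOp G l ε P φ) (volume.restrict S) :=
    (hTm.aestronglyMeasurable).congr haeq.symm
  have hmem : MemLp (unfoldOp G l ε P φ) (ENNReal.ofReal p) (volume.restrict S) := by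
    refine ⟨haesm, ?_⟩
    rw [eLpNorm_eq_lintegral_rpow_enorm_toReal hpne0 hpnetop, hptoReal]
    exact ENNReal.rpow_lt_top_of_nonneg (by positivity) hCfin
  -- convert the real integrals
  have hID : ∫ z in D, |φ z| ^ p = B.toReal := by
    rw [integral_eq_lintegral_of_nonneg_ae
      (Filter.Eventually.of_forall fun z => by positivity)
      (by
        have h1 : AEMeasurable φ (volume.restrict D) := hφm.aemeasurable
        have h2 : AEMeasurable (fun z => |φ z| ^ p) (volume.restrict D) := by fun_prop
        exact h2.aestronglyMeasurable)]
    congr 1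
    apply lintegral_congr
    intro z
    rw [← enorm_eq_nnnorm, Real.enorm_eq_ofReal_abs, ← ENNReal.ofReal_rpow_of_nonneg (abs_nonneg _) hp0.le]
  have hIS : ∫ q in S, |unfoldOp G l ε P φ q| ^ p = C.toReal := by
    rw [integral_eq_lintegral_of_nonneg_ae
      (Filter.Eventually.of_forall fun q => by positivity)
      (by
        have h1 : AEMeasurable (unfoldOp G l ε P φ) (volume.restrict S) := haesm.aemeasurable
        have h2 : AEMeasurable (fun q => |unfoldOp G l ε P φ q| ^ p) (volume.restrict S) := by
          fun_prop
        exact h2.aestronglyMeasurable)]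
    congr 1
    apply lintegral_congr
    intro q
    rw [← enorm_eq_nnnorm, Real.enorm_eq_ofReal_abs, ← ENNReal.ofReal_rpow_of_nonneg (abs_nonneg _) hp0.le]
  refine ⟨hmem, ?_, ?_⟩
  · rw [hID, hIS]
    have h1 : (l0 / ε) * B.toReal ≤ C.toReal := by
      have h2 := ENNReal.toReal_mono hCfin hlow
      rwa [ENNReal.toReal_mul, ENNReal.toReal_ofReal (by positivity)] at h2
    calc (l0 / ε) ^ (1 / p) * B.toReal ^ (1 / p)
        = ((l0 / ε) * B.toReal) ^ (1 / p) :=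
          (Real.mul_rpow (by positivity) ENNReal.toReal_nonneg).symm
      _ ≤ C.toReal ^ (1 / p) := Real.rpow_le_rpow (by positivity) h1 (by positivity)
  · rw [hID, hIS]
    have h1 : C.toReal ≤ (l1 / ε) * B.toReal := by
      have h2 := ENNReal.toReal_mono
        (ENNReal.mul_lt_top ENNReal.ofReal_ne_top.lt_top hBfin.lt_top).ne hupp
      rwa [ENNReal.toReal_mul, ENNReal.toReal_ofReal (by positivity)] at h2
    calc C.toReal ^ (1 / p) ≤ ((l1 / ε) * B.toReal) ^ (1 / p) :=
          Real.rpow_le_rpow ENNReal.toReal_nonneg h1 (by positivity)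
      _ = (l1 / ε) ^ (1 / p) * B.toReal ^ (1 / p) :=
          Real.mul_rpow (by positivity) ENNReal.toReal_nonneg
end
end

section
/- (Pointwise convergence of the unfolded boundary profile, Prop. 4.3.) Let l : (0,1) → ℝ be continuously differentiable with l(t) ≥ l_0 > 0 for all t, and let G : (0,1) × ℝ → ℝ be continuous and such that for each t ∈ (0,1) the function G(t,·) is l(t)-periodic. Let x ∈ (0,1) satisfy x·l'(x) ≠ l(x), and let y₁ ∈ (0, l(x)). Let ε_n → 0⁺, let p_n be natural numbers, and let a_n, b_n ∈ (0,1) with a_n < b_n, a_n → x, b_n → x, a_n = ε_n p_n l(a_n), and b_n = ε_n (p_n + 1) l(b_n). Set Γ_n := (b_n − a_n)/l(a_n). Then G( a_n + Γ_n y₁, (1/ε_n)(a_n + Γ_n y₁) ) → G(x, y₁) as n → ∞. -/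
open MeasureTheory Set Filter Topology

noncomputable section

private lemma slope_tendsto_aux {l : ℝ → ℝ} {x c : ℝ}
    (h : HasStrictDerivAt l c x) {u v : ℕ → ℝ}
    (hu : Tendsto u atTop (𝓝 x)) (hv : Tendsto v atTop (𝓝 x))
    (hne : ∀ n, v n < u n) :
    Tendsto (fun n => (l (u n) - l (v n)) / (u n - v n)) atTop (𝓝 c) := by
  have h1 := h.hasStrictFDerivAt.isLittleO
  have h2 : Tendsto (fun n => (u n, v n)) atTop (𝓝 (x, x)) := hu.prodMk_nhds hv
  have h3 := h1.comp_tendsto h2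
  have h4 := h3.tendsto_div_nhds_zero
  have h5 := h4.add_const c
  rw [zero_add] at h5
  refine h5.congr fun n => ?_
  have hd : u n - v n ≠ 0 := sub_ne_zero.2 (hne n).ne'
  simp only [Function.comp, ContinuousLinearMap.smulRight_apply,
    ContinuousLinearMap.one_apply, ContinuousLinearMap.toSpanSingleton_apply, smul_eq_mul]
  field_simp
  ring

private lemma alg_aux (ε A B D p a τ y₁ : ℝ) (hε : ε ≠ 0) (hA : A ≠ 0) (hD : D ≠ 0)
    (h2 : a = ε * p * A) :
    (1/ε) * (a + (ε * B / D) * y₁) =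
      y₁ * B * (A - a * τ) / (A * D) + p * (A + τ * ((ε * B / D) * y₁)) := by
  subst h2; field_simp; ring


/-- Pointwise convergence of the unfolded boundary profile (Prop. 4.3). -/
theorem unfolded_boundary_profile_limit
    (l0 : ℝ) (hl0 : 0 < l0)
    (l : ℝ → ℝ) (hlC1 : ContDiffOn ℝ 1 l (Ioo 0 1))
    (hlb : ∀ t ∈ Ioo (0 : ℝ) 1, l0 ≤ l t)
    (x : ℝ) (hx : x ∈ Ioo (0 : ℝ) 1) (hnd : x * deriv l x ≠ l x)
    (ε : ℕ → ℝ) (hεpos : ∀ n, 0 < ε n) (hε : Tendsto ε atTop (𝓝 0))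
    (p : ℕ → ℕ) (a b : ℕ → ℝ)
    (ha : ∀ n, a n ∈ Ioo (0 : ℝ) 1) (hb : ∀ n, b n ∈ Ioo (0 : ℝ) 1)
    (hab : ∀ n, a n < b n)
    (hax : Tendsto a atTop (𝓝 x)) (hbx : Tendsto b atTop (𝓝 x))
    (haeq : ∀ n, a n = ε n * (p n : ℝ) * l (a n))
    (hbeq : ∀ n, b n = ε n * ((p n : ℝ) + 1) * l (b n))
    (G : ℝ → ℝ → ℝ)
    (hGcont : ContinuousOn (fun z : ℝ × ℝ => G z.1 z.2) (Ioo 0 1 ×ˢ (univ : Set ℝ)))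
    (hGper : ∀ t ∈ Ioo (0 : ℝ) 1, ∀ y : ℝ, G t (y + l t) = G t y)
    (y₁ : ℝ) (hy₁ : y₁ ∈ Ioo (0 : ℝ) (l x)) :
    Tendsto
      (fun n => G (a n + (b n - a n) / l (a n) * y₁)
          ((1 / ε n) * (a n + (b n - a n) / l (a n) * y₁)))
      atTop (𝓝 (G x y₁)) := by
  set c := deriv l x with hc
  have hmem : Ioo (0:ℝ) 1 ∈ 𝓝 x := isOpen_Ioo.mem_nhds hx
  have hlCA : ContDiffAt ℝ 1 l x := hlC1.contDiffAt hmem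
  have hstrict : HasStrictDerivAt l c x := hlCA.hasStrictDerivAt one_ne_zero
  have hlcontx : ContinuousAt l x := hlCA.continuousAt
  have hlxpos : 0 < l x := lt_of_lt_of_le hl0 (hlb x hx)
  have hndc : l x - x * c ≠ 0 := sub_ne_zero.2 (Ne.symm hnd)
  have hApos : ∀ n, 0 < l (a n) := fun n => lt_of_lt_of_le hl0 (hlb _ (ha n))
  have hbapos : ∀ n, 0 < b n - a n := fun n => sub_pos.2 (hab n)
  -- limits of l (a n), l (b n)
  have hA : Tendsto (fun n => l (a n)) atTop (𝓝 (l x)) := hlcontx.tendsto.comp hax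
  have hB : Tendsto (fun n => l (b n)) atTop (𝓝 (l x)) := hlcontx.tendsto.comp hbx
  -- slope over (a n, b n)
  set σ : ℕ → ℝ := fun n => (l (b n) - l (a n)) / (b n - a n) with hσdef
  have hσ : Tendsto σ atTop (𝓝 c) := slope_tendsto_aux hstrict hbx hax hab
  set D : ℕ → ℝ := fun n => l (a n) - a n * σ n with hDdef
  have hDlim : Tendsto D atTop (𝓝 (l x - x * c)) := hA.sub (hax.mul hσ)
  have hDne : ∀ᶠ n in atTop, D n ≠ 0 := hDlim.eventually_ne hndc
  -- key identity
  have hkey : ∀ n, (b n - a n) * D n = ε n * (l (a n) * l (b n)) := by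
    intro n
    have h1 : σ n * (b n - a n) = l (b n) - l (a n) := by
      rw [hσdef]; exact div_mul_cancel₀ _ (hbapos n).ne'
    have h2 := haeq n
    have h3 := hbeq n
    simp only [hDdef]
    linear_combination (-(a n)) * h1 + (-(l (b n))) * h2 + (l (a n)) * h3
  set Γ : ℕ → ℝ := fun n => (b n - a n) / l (a n) with hΓdef
  have hΓpos : ∀ n, 0 < Γ n := fun n => div_pos (hbapos n) (hApos n)
  have hΓeq : ∀ n, D n ≠ 0 → Γ n = ε n * l (b n) / D n := by
    intro n hDn
    rw [hΓdef]
    rw [div_eq_div_iff (hApos n).ne' hDn]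
    linear_combination hkey n
  have hΓlim : Tendsto Γ atTop (𝓝 0) := by
    have h1 : Tendsto (fun n => ε n * l (b n) / D n) atTop
        (𝓝 (0 * l x / (l x - x * c))) := (hε.mul hB).div hDlim hndc
    rw [zero_mul, zero_div] at h1
    exact h1.congr' (by filter_upwards [hDne] with n hDn using (hΓeq n hDn).symm)
  set X : ℕ → ℝ := fun n => a n + Γ n * y₁ with hXdef
  have hy₁0 : 0 < y₁ := hy₁.1
  have hXgt : ∀ n, a n < X n := fun n => lt_add_of_pos_right _ (mul_pos (hΓpos n) hy₁0)
  have hXlim : Tendsto X atTop (𝓝 x) := by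
    have := hax.add (hΓlim.mul_const y₁)
    simpa using this
  have hXmem : ∀ᶠ n in atTop, X n ∈ Ioo (0:ℝ) 1 := hXlim.eventually_mem hmem
  -- slope over (a n, X n)
  set τ : ℕ → ℝ := fun n => (l (X n) - l (a n)) / (X n - a n) with hτdef
  have hτ : Tendsto τ atTop (𝓝 c) := slope_tendsto_aux hstrict hXlim hax hXgt
  have hlX : ∀ n, l (X n) = l (a n) + τ n * (Γ n * y₁) := by
    intro n
    have h1 : X n - a n = Γ n * y₁ := by rw [hXdef]; ring
    rw [hτdef]
    simp only [h1]
    rw [div_mul_cancel₀]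
    · ring
    · rw [← h1]; exact sub_ne_zero.2 (hXgt n).ne'
  -- the reduced second coordinate
  set S : ℕ → ℝ := fun n => y₁ * l (b n) * (l (a n) - a n * τ n) / (l (a n) * D n)
    with hSdef
  have hSlim : Tendsto S atTop (𝓝 y₁) := by
    have hE : Tendsto (fun n => l (a n) - a n * τ n) atTop (𝓝 (l x - x * c)) :=
      hA.sub (hax.mul hτ)
    have h1 : Tendsto S atTop
        (𝓝 (y₁ * l x * (l x - x * c) / (l x * (l x - x * c)))) :=
      ((tendsto_const_nhds.mul hB).mul hE).div (hA.mul hDlim)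
        (mul_ne_zero hlxpos.ne' hndc)
    have h2 : y₁ * l x * (l x - x * c) / (l x * (l x - x * c)) = y₁ := by
      field_simp
    rwa [h2] at h1
  -- periodicity for natural multiples
  have hGperN : ∀ t ∈ Ioo (0:ℝ) 1, ∀ y : ℝ, ∀ k : ℕ, G t (y + k * l t) = G t y := by
    intro t ht y k
    induction k with
    | zero => simp
    | succ k ih =>
      have he : y + ((k:ℝ)+1) * l t = (y + (k:ℝ) * l t) + l t := by ring
      rw [Nat.cast_succ, he, hGper t ht, ih]
  -- eventual equality
  have hmain : ∀ᶠ n in atTop,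
      G (X n) (S n) = G (X n) ((1 / ε n) * (a n + Γ n * y₁)) := by
    filter_upwards [hDne, hXmem] with n hDn hXm
    have harg : (1 / ε n) * (a n + Γ n * y₁) = S n + (p n : ℝ) * l (X n) := by
      rw [hΓeq n hDn, hlX n, hΓeq n hDn, hSdef]
      exact alg_aux (ε n) (l (a n)) (l (b n)) (D n) (p n) (a n) (τ n) y₁
        (hεpos n).ne' (hApos n).ne' hDn (haeq n)
    rw [harg, hGperN (X n) hXm (S n) (p n)]
  -- continuity of G at (x, y₁)
  have hopen : IsOpen (Ioo (0:ℝ) 1 ×ˢ (univ : Set ℝ)) := isOpen_Ioo.prod isOpen_univ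
  have hGat : ContinuousAt (fun z : ℝ × ℝ => G z.1 z.2) (x, y₁) :=
    hGcont.continuousAt (hopen.mem_nhds ⟨hx, mem_univ _⟩)
  have hlimG : Tendsto (fun n => G (X n) (S n)) atTop (𝓝 (G x y₁)) :=
    hGat.tendsto.comp (hXlim.prodMk_nhds hSlim)
  exact hlimG.congr' hmain
end
end
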